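/- Let d ≥ 2, let (B_i)_{i≥1} be independent Bernoulli random variables with P(B_i = 1) = (d+1)/(d·i+1), and set G_m := Σ_{i=1}^m B_i. Let c̃_d be the unique c > (d+1)/d with f_d(c) = −1, where f_d(c) = c − (d+1)/d − c·log(d·c/(d+1)). Then for every c > c̃_d, Σ_{m=1}^∞ P(G_m > c·log m) < ∞. -/

import Mathlib

open MeasureTheory ProbabilityTheory Filter
open scoped ENNReal

/-- The function `f_d(c) = c − (d+1)/d − c·log(d·c/(d+1))`. -/
noncomputable def fd (d : ℕ) (c : ℝ) : ℝ :=
  c - ((d : ℝ) + 1) / d - c * Real.log ((d : ℝ) * c / ((d : ℝ) + 1))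

lemma aux_lintegral_prod {Ω : Type*} [MeasurableSpace Ω] (P : Measure Ω)
    [IsProbabilityMeasure P]
    (Y : ℕ → Ω → ℝ≥0∞) (hYindep : iIndepFun Y P)
    (hYm : ∀ i, Measurable (Y i)) (s : Finset ℕ) :
    ∫⁻ ω, ∏ i ∈ s, Y i ω ∂P = ∏ i ∈ s, ∫⁻ ω, Y i ω ∂P := by
  classical
  induction s using Finset.induction with
  | empty => simp
  | @insert a s ha ih =>
    have hindep : IndepFun (Y a) (∏ j ∈ s, Y j) P :=
      (hYindep.indepFun_finsetProd_of_notMem hYm ha).symm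
    have hpm : Measurable (∏ j ∈ s, Y j) := by
      rw [show (∏ j ∈ s, Y j) = fun a => ∏ j ∈ s, Y j a from funext fun a => Finset.prod_apply a s Y]
      exact s.measurable_prod fun i _ => hYm i
    have hmul : ∫⁻ ω, Y a ω * (∏ j ∈ s, Y j) ω ∂P
        = (∫⁻ ω, Y a ω ∂P) * ∫⁻ ω, (∏ j ∈ s, Y j) ω ∂P :=
      lintegral_mul_eq_lintegral_mul_lintegral_of_indepFun'' (hYm a).aemeasurable
        hpm.aemeasurable hindep
    simp only [Finset.prod_apply] at hmul
    simp only [Finset.prod_insert ha]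
    rw [hmul, ih]

lemma fd_hasDerivAt (d : ℕ) (hd : 1 ≤ d) {x : ℝ} (hx : 0 < x) :
    HasDerivAt (fd d) (-(Real.log ((d : ℝ) * x / ((d : ℝ) + 1)))) x := by
  have hd0 : (0:ℝ) < d := by exact_mod_cast hd
  have hd1 : (0:ℝ) < (d:ℝ) + 1 := by linarith
  have hux : (0:ℝ) < (d : ℝ) * x / ((d : ℝ) + 1) := by positivity
  have hu : HasDerivAt (fun y : ℝ => (d : ℝ) * y / ((d : ℝ) + 1)) ((d:ℝ) / ((d:ℝ)+1)) x := by
    simpa using (((hasDerivAt_id x).const_mul (d:ℝ)).div_const ((d:ℝ)+1))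
  have hlog : HasDerivAt (fun y : ℝ => Real.log ((d : ℝ) * y / ((d : ℝ) + 1)))
      (((d : ℝ) * x / ((d : ℝ) + 1))⁻¹ * ((d:ℝ) / ((d:ℝ)+1))) x :=
    by have := (Real.hasDerivAt_log hux.ne').comp x hu; exact this
  have hmul : HasDerivAt (fun y : ℝ => y * Real.log ((d : ℝ) * y / ((d : ℝ) + 1)))
      (1 * Real.log ((d : ℝ) * x / ((d : ℝ) + 1))
        + x * (((d : ℝ) * x / ((d : ℝ) + 1))⁻¹ * ((d:ℝ) / ((d:ℝ)+1)))) x :=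
    (hasDerivAt_id x).mul hlog
  have h1 : HasDerivAt (fun y : ℝ => y - ((d : ℝ) + 1) / d) 1 x :=
    (hasDerivAt_id x).sub_const _
  have h := h1.sub hmul
  have hkey : x * (((d : ℝ) * x / ((d : ℝ) + 1))⁻¹ * ((d:ℝ) / ((d:ℝ)+1))) = 1 := by
    field_simp
  rw [hkey] at hmul
  have h2 := h1.sub hmul
  have heq : fd d = fun y : ℝ => (y - ((d : ℝ) + 1) / d) - y * Real.log ((d : ℝ) * y / ((d : ℝ) + 1)) := by
    funext y; simp [fd]
  rw [heq]
  exact h2.congr_deriv (by ring)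

lemma fd_strictAntiOn (d : ℕ) (hd : 1 ≤ d) {a b : ℝ} (ha : ((d:ℝ) + 1) / d < a)
    (hab : a < b) : fd d b < fd d a := by
  have hd0 : (0:ℝ) < d := by exact_mod_cast hd
  have hK : (0:ℝ) < ((d:ℝ) + 1) / d := by positivity
  have hanti : StrictAntiOn (fd d) (Set.Ici a) := by
    apply strictAntiOn_of_deriv_neg (convex_Ici a)
    · intro x hx
      exact ((fd_hasDerivAt d hd ((hK.trans ha).trans_le hx)).continuousAt).continuousWithinAt
    · intro x hx
      rw [interior_Ici] at hx
      have hxa : a < x := hx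
      have h0x : 0 < x := hK.trans (ha.trans hxa)
      rw [(fd_hasDerivAt d hd h0x).deriv]
      have : 1 < (d : ℝ) * x / ((d : ℝ) + 1) := by
        rw [lt_div_iff₀ (by linarith)]
        have := (div_lt_iff₀ hd0).mp (ha.trans hxa)
        linarith
      simpa using Real.log_pos this
  exact hanti (Set.self_mem_Ici) (le_of_lt hab) hab

lemma aux_factor {Ω : Type*} [MeasurableSpace Ω] (P : Measure Ω)
    [IsProbabilityMeasure P] (X : Ω → ℕ) (hXm : Measurable X) (hX01 : ∀ ω, X ω ≤ 1)
    {p : ℝ} (hp0 : 0 ≤ p) (hp : P {ω | X ω = 1} = ENNReal.ofReal p)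
    {t : ℝ} (ht : 0 ≤ t) :
    ∫⁻ ω, ENNReal.ofReal (Real.exp (t * (X ω : ℝ))) ∂P
      ≤ ENNReal.ofReal (Real.exp ((Real.exp t - 1) * p)) := by
  have het1 : (0:ℝ) ≤ Real.exp t - 1 := by
    have := Real.one_le_exp ht; linarith
  have hA : MeasurableSet {ω | X ω = 1} := hXm (measurableSet_singleton 1)
  have hpt : ∀ ω, ENNReal.ofReal (Real.exp (t * (X ω : ℝ)))
      = 1 + ENNReal.ofReal (Real.exp t - 1) * ({ω | X ω = 1}.indicator 1 ω) := by
    intro ω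
    rcases Nat.le_one_iff_eq_zero_or_eq_one.mp (hX01 ω) with h | h
    · have : ω ∉ {ω | X ω = 1} := by simp [h]
      simp [h, Set.indicator_of_notMem this]
    · have hmem : ω ∈ {ω | X ω = 1} := h
      rw [Set.indicator_of_mem hmem]
      simp only [h, Nat.cast_one, mul_one, Pi.one_apply]
      rw [← ENNReal.ofReal_one, ← ENNReal.ofReal_add zero_le_one het1]
      congr 1
      ring
  calc ∫⁻ ω, ENNReal.ofReal (Real.exp (t * (X ω : ℝ))) ∂P
      = ∫⁻ ω, 1 + ENNReal.ofReal (Real.exp t - 1) * ({ω | X ω = 1}.indicator 1 ω) ∂P :=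
        lintegral_congr hpt
    _ = 1 + ENNReal.ofReal (Real.exp t - 1) * ENNReal.ofReal p := by
        rw [lintegral_add_left measurable_const, lintegral_const_mul _
          (measurable_one.indicator hA), lintegral_indicator_one hA, hp]
        simp
    _ = ENNReal.ofReal (1 + (Real.exp t - 1) * p) := by
        rw [ENNReal.ofReal_add zero_le_one (by positivity), ENNReal.ofReal_one,
          ENNReal.ofReal_mul het1]
    _ ≤ ENNReal.ofReal (Real.exp ((Real.exp t - 1) * p)) := by
        apply ENNReal.ofReal_le_ofReal
        have := Real.add_one_le_exp ((Real.exp t - 1) * p)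
        linarith

/-- Let `d ≥ 2`, let `(B_i)_{i≥1}` be independent Bernoulli random variables with
`P(B_i = 1) = (d+1)/(d·i+1)`, and `G_m = Σ_{i=1}^m B_i`.  Let `c̃_d` be the unique `c > (d+1)/d`
with `f_d(c) = −1`.  Then for every `c > c̃_d`, `Σ_{m=1}^∞ P(G_m > c·log m) < ∞`. -/
theorem generation_tail_summable (d : ℕ) (hd : 2 ≤ d)
    {Ω : Type*} [MeasurableSpace Ω] (P : Measure Ω) [IsProbabilityMeasure P]
    (B : ℕ → Ω → ℕ) (hBmeas : ∀ i, Measurable (B i))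
    (hB01 : ∀ i ω, B i ω ≤ 1)
    (hBdist : ∀ i : ℕ, 1 ≤ i →
      P {ω | B i ω = 1} = ENNReal.ofReal (((d : ℝ) + 1) / ((d : ℝ) * i + 1)))
    (hBindep : iIndepFun B P)
    (ctilde : ℝ) (hct : ((d : ℝ) + 1) / d < ctilde) (hfct : fd d ctilde = -1) :
    ∀ c : ℝ, ctilde < c →
      ∑' m : ℕ, P {ω | c * Real.log m < ((∑ i ∈ Finset.Icc 1 m, B i ω : ℕ) : ℝ)} < ⊤ := by
  intro c hc
  have hd1 : 1 ≤ d := by omega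
  have hd0 : (0:ℝ) < d := by exact_mod_cast hd1
  have hd1' : (0:ℝ) < (d:ℝ) + 1 := by linarith
  set K : ℝ := ((d:ℝ) + 1) / d with hK_def
  have hK0 : 0 < K := by positivity
  have hcK : K < c := hct.trans hc
  have hc0 : 0 < c := hK0.trans hcK
  have hr1 : 1 < (d:ℝ) * c / ((d:ℝ) + 1) := by
    rw [lt_div_iff₀ hd1']
    have := (div_lt_iff₀ hd0).mp hcK
    linarith
  set t : ℝ := Real.log ((d:ℝ) * c / ((d:ℝ) + 1)) with ht_def
  have ht : 0 < t := Real.log_pos hr1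
  have het : Real.exp t = (d:ℝ) * c / ((d:ℝ) + 1) := Real.exp_log (by positivity)
  set f : ℝ := fd d c with hf_def
  have hf : f < -1 := by
    rw [← hfct]; exact fd_strictAntiOn d hd1 hct hc
  set A : ℝ := c - K with hA_def
  have hA : (Real.exp t - 1) * K = A := by
    rw [het, hA_def, hK_def]
    field_simp
  have hfA : A - t * c = f := by
    rw [hA_def, hf_def, fd, ht_def, hK_def]; ring
  -- the ENNReal-valued exponential functions
  set g : ℕ → ℝ≥0∞ := fun n => ENNReal.ofReal (Real.exp (t * n)) with hg_def
  set Y : ℕ → Ω → ℝ≥0∞ := fun i ω => g (B i ω) with hY_def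
  have hYm : ∀ i, Measurable (Y i) := fun i => (measurable_from_nat (f := g)).comp (hBmeas i)
  have hYindep : iIndepFun Y P :=
    hBindep.comp (fun _ => g) (fun _ => measurable_from_nat)
  -- main per-m bound
  have hbound : ∀ m : ℕ, 1 ≤ m →
      P {ω | c * Real.log m < ((∑ i ∈ Finset.Icc 1 m, B i ω : ℕ) : ℝ)}
        ≤ ENNReal.ofReal (Real.exp A * (m:ℝ) ^ f) := by
    intro m hm
    have hm0 : (0:ℝ) < m := by exact_mod_cast hm
    -- Markov
    have hGm : Measurable fun ω => (∑ i ∈ Finset.Icc 1 m, B i ω : ℕ) :=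
      Finset.measurable_sum _ fun i _ => hBmeas i
    have hmeas : Measurable fun ω =>
        ENNReal.ofReal (Real.exp (t * ((∑ i ∈ Finset.Icc 1 m, B i ω : ℕ) : ℝ))) := by
      exact (measurable_from_nat (f := g)).comp hGm
    have hεne : ENNReal.ofReal (Real.exp (t * (c * Real.log m))) ≠ 0 := by
      simp [Real.exp_pos]
    have hsub : {ω | c * Real.log m < ((∑ i ∈ Finset.Icc 1 m, B i ω : ℕ) : ℝ)}
        ⊆ {ω | ENNReal.ofReal (Real.exp (t * (c * Real.log m)))
            ≤ ENNReal.ofReal (Real.exp (t * ((∑ i ∈ Finset.Icc 1 m, B i ω : ℕ) : ℝ)))} := by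
      intro ω hω
      simp only [Set.mem_setOf_eq] at hω ⊢
      apply ENNReal.ofReal_le_ofReal
      apply Real.exp_le_exp.mpr
      exact mul_le_mul_of_nonneg_left hω.le ht.le
    have hmarkov : P {ω | c * Real.log m < ((∑ i ∈ Finset.Icc 1 m, B i ω : ℕ) : ℝ)}
        ≤ (∫⁻ ω, ENNReal.ofReal (Real.exp (t * ((∑ i ∈ Finset.Icc 1 m, B i ω : ℕ) : ℝ))) ∂P)
          / ENNReal.ofReal (Real.exp (t * (c * Real.log m))) :=
      (measure_mono (μ := P) hsub).trans
        (meas_ge_le_lintegral_div hmeas.aemeasurable hεne ENNReal.ofReal_ne_top)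
    -- compute the lintegral
    have hint : ∫⁻ ω, ENNReal.ofReal (Real.exp (t * ((∑ i ∈ Finset.Icc 1 m, B i ω : ℕ) : ℝ))) ∂P
        = ∏ i ∈ Finset.Icc 1 m, ∫⁻ ω, Y i ω ∂P := by
      rw [← aux_lintegral_prod P Y hYindep hYm]
      apply lintegral_congr
      intro ω
      rw [Nat.cast_sum, Finset.mul_sum, Real.exp_sum,
        ENNReal.ofReal_prod_of_nonneg (fun i _ => (Real.exp_pos _).le)]
    have hfactor : ∀ i ∈ Finset.Icc 1 m, ∫⁻ ω, Y i ω ∂P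
        ≤ ENNReal.ofReal (Real.exp ((Real.exp t - 1) * (((d:ℝ) + 1) / ((d:ℝ) * i + 1)))) := by
      intro i hi
      have hi1 : 1 ≤ i := (Finset.mem_Icc.mp hi).1
      have hpi0 : (0:ℝ) ≤ ((d:ℝ) + 1) / ((d:ℝ) * i + 1) := by positivity
      exact aux_factor P (B i) (hBmeas i) (hB01 i) hpi0 (hBdist i hi1) ht.le
    -- sum of the p_i
    have hsum : ∑ i ∈ Finset.Icc 1 m, (((d:ℝ) + 1) / ((d:ℝ) * i + 1)) ≤ K * (1 + Real.log m) := by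
      have h1 : ∑ i ∈ Finset.Icc 1 m, (((d:ℝ) + 1) / ((d:ℝ) * i + 1))
          ≤ ∑ i ∈ Finset.Icc 1 m, K * ((i:ℝ))⁻¹ := by
        apply Finset.sum_le_sum
        intro i hi
        have hi1 : 1 ≤ i := (Finset.mem_Icc.mp hi).1
        have hi0 : (0:ℝ) < i := by exact_mod_cast hi1
        have : ((d:ℝ) + 1) / ((d:ℝ) * i + 1) ≤ ((d:ℝ) + 1) / ((d:ℝ) * i) := by
          apply div_le_div_of_nonneg_left (by positivity) (by positivity) (by linarith)
        refine this.trans (le_of_eq ?_)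
        rw [hK_def]
        field_simp
      have h2 : ∑ i ∈ Finset.Icc 1 m, K * ((i:ℝ))⁻¹ = K * ((harmonic m : ℚ) : ℝ) := by
        rw [← Finset.mul_sum]
        congr 1
        rw [harmonic_eq_sum_Icc]
        push_cast
        ring
      have h3 : ((harmonic m : ℚ) : ℝ) ≤ 1 + Real.log m := harmonic_le_one_add_log m
      calc ∑ i ∈ Finset.Icc 1 m, (((d:ℝ) + 1) / ((d:ℝ) * i + 1))
          ≤ K * ((harmonic m : ℚ) : ℝ) := h2 ▸ h1
        _ ≤ K * (1 + Real.log m) := by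
            exact mul_le_mul_of_nonneg_left h3 hK0.le
    -- combine
    have hprodle : ∏ i ∈ Finset.Icc 1 m, ∫⁻ ω, Y i ω ∂P
        ≤ ENNReal.ofReal (Real.exp ((Real.exp t - 1) * (K * (1 + Real.log m)))) := by
      calc ∏ i ∈ Finset.Icc 1 m, ∫⁻ ω, Y i ω ∂P
          ≤ ∏ i ∈ Finset.Icc 1 m,
            ENNReal.ofReal (Real.exp ((Real.exp t - 1) * (((d:ℝ) + 1) / ((d:ℝ) * i + 1)))) :=
            Finset.prod_le_prod' hfactor
        _ = ENNReal.ofReal (Real.exp (∑ i ∈ Finset.Icc 1 m,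
              (Real.exp t - 1) * (((d:ℝ) + 1) / ((d:ℝ) * i + 1)))) := by
            rw [Real.exp_sum, ENNReal.ofReal_prod_of_nonneg (fun i _ => (Real.exp_pos _).le)]
        _ ≤ _ := by
            apply ENNReal.ofReal_le_ofReal
            apply Real.exp_le_exp.mpr
            rw [← Finset.mul_sum]
            have het1 : (0:ℝ) ≤ Real.exp t - 1 := by
              have := Real.one_le_exp ht.le; linarith
            exact mul_le_mul_of_nonneg_left hsum het1
    -- final computation
    have hfinal : ENNReal.ofReal (Real.exp ((Real.exp t - 1) * (K * (1 + Real.log m))))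
        / ENNReal.ofReal (Real.exp (t * (c * Real.log m)))
        = ENNReal.ofReal (Real.exp A * (m:ℝ) ^ f) := by
      rw [← ENNReal.ofReal_div_of_pos (Real.exp_pos _), ← Real.exp_sub]
      congr 1
      rw [Real.rpow_def_of_pos hm0, ← Real.exp_add]
      congr 1
      have : (Real.exp t - 1) * (K * (1 + Real.log m)) = A * (1 + Real.log m) := by
        rw [← hA]; ring
      rw [this]
      have : A * (1 + Real.log ↑m) - t * (c * Real.log ↑m)
          = A + (A - t * c) * Real.log m := by ring
      rw [this, hfA]
      ring
    calc P {ω | c * Real.log m < ((∑ i ∈ Finset.Icc 1 m, B i ω : ℕ) : ℝ)}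
        ≤ (∫⁻ ω, ENNReal.ofReal (Real.exp (t * ((∑ i ∈ Finset.Icc 1 m, B i ω : ℕ) : ℝ))) ∂P)
          / ENNReal.ofReal (Real.exp (t * (c * Real.log m))) := hmarkov
      _ ≤ ENNReal.ofReal (Real.exp ((Real.exp t - 1) * (K * (1 + Real.log m))))
          / ENNReal.ofReal (Real.exp (t * (c * Real.log m))) := by
          apply ENNReal.div_le_div_right
          rw [hint]; exact hprodle
      _ = ENNReal.ofReal (Real.exp A * (m:ℝ) ^ f) := hfinal
  -- m = 0 case
  have hzero : P {ω | c * Real.log (0:ℕ) < ((∑ i ∈ Finset.Icc 1 0, B i ω : ℕ) : ℝ)} = 0 := by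
    have : {ω : Ω | c * Real.log (0:ℕ) < ((∑ i ∈ Finset.Icc 1 0, B i ω : ℕ) : ℝ)} = ∅ := by
      ext ω; simp
    rw [this, measure_empty]
  -- summability
  have hnn : ∀ m : ℕ, 0 ≤ Real.exp A * (m:ℝ) ^ f := fun m => by positivity
  have hsummable : Summable (fun m : ℕ => Real.exp A * (m:ℝ) ^ f) :=
    (Real.summable_nat_rpow.mpr hf).mul_left _
  calc ∑' m : ℕ, P {ω | c * Real.log m < ((∑ i ∈ Finset.Icc 1 m, B i ω : ℕ) : ℝ)}
      ≤ ∑' m : ℕ, ENNReal.ofReal (Real.exp A * (m:ℝ) ^ f) := by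
        apply ENNReal.tsum_le_tsum
        intro m
        rcases Nat.eq_zero_or_pos m with h | h
        · subst h; rw [hzero]; exact zero_le
        · exact hbound m h
    _ = ENNReal.ofReal (∑' m : ℕ, Real.exp A * (m:ℝ) ^ f) :=
        (ENNReal.ofReal_tsum_of_nonneg hnn hsummable).symm
    _ < ⊤ := ENNReal.ofReal_lt_top
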